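/- Let m = 3. For each permutation (i,j,k) of (1,2,3) define the parallelogram Π^k = {θ_1 v_i + θ_2 v_j : θ_1, θ_2 ∈ [0,1]}, the planar slice V^k = {v ∈ V : v = θ_1 v_i + θ_2 v_j for some θ_1, θ_2 ≥ 0}, and the generalized semi-infinite cylinder Ψ^k = {θ_1 v_k + θ_2 v : v ∈ V^k, θ_1 ≥ 0, θ_2 ∈ [0,1]}. Suppose the speed profile V is convex, V_s ⊂ Ψ^1 ∩ Ψ^2 ∩ Ψ^3, and V^r ⊂ Π^r for r = 1,2,3. Then the simplex (x = 0, z_1, z_2, z_3) is monotone causal: for every ξ in the interior of Ξ_3 and every r ∈ {1,2,3}, C(ξ) ≥ (1−ξ_r)·C(γ_r), where γ_r is the oblique projection of ξ (γ_{r,r} = 0, γ_{r,j} = ξ_j/(1−ξ_r) for j ≠ r); and for every ξ on a face of Ξ_3 with ξ_r = 0 and ξ_i, ξ_j > 0, C(ξ) ≥ ξ_i C_i and C(ξ) ≥ ξ_j C_j. -/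

import Mathlib

open Finset

/-- The semi-Lagrangian transition cost `C(ξ) = |x̃_ξ| / f(a_ξ)`, written as a
function of the waypoint `w = x̃_ξ`.  In particular `slCost f (z j) = C_j`. -/
noncomputable def slCost {E : Type*} [NormedAddCommGroup E] [InnerProductSpace ℝ E]
    (f : E → ℝ) (w : E) : ℝ := ‖w‖ / f (‖w‖⁻¹ • w)

/-- The velocity in the direction of `w`:  `slVel f (z j) = v_j`. -/
noncomputable def slVel {E : Type*} [NormedAddCommGroup E] [InnerProductSpace ℝ E]
    (f : E → ℝ) (w : E) : E := f (‖w‖⁻¹ • w) • (‖w‖⁻¹ • w)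

/-- The speed profile `V = {f(a)·a : |a| = 1}`. -/
def speedProfile {E : Type*} [NormedAddCommGroup E] [InnerProductSpace ℝ E]
    (f : E → ℝ) : Set E :=
  {v | ∃ a : E, ‖a‖ = 1 ∧ v = f a • a}

/-- The body enclosed by the speed profile. -/
def speedBody {E : Type*} [NormedAddCommGroup E] [InnerProductSpace ℝ E]
    (f : E → ℝ) : Set E :=
  {v | ∃ (a : E) (c : ℝ), ‖a‖ = 1 ∧ 0 ≤ c ∧ c ≤ 1 ∧ v = (c * f a) • a}

/-- `V_s`:  the part of the speed profile spanned with nonnegative coefficients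
by the vertex velocities `v 0, v 1, v 2`. -/
def sectorVs (f : EuclideanSpace ℝ (Fin 3) → ℝ)
    (v : Fin 3 → EuclideanSpace ℝ (Fin 3)) : Set (EuclideanSpace ℝ (Fin 3)) :=
  {w ∈ speedProfile f | ∃ θ : Fin 3 → ℝ, (∀ i, 0 ≤ θ i) ∧ w = ∑ i, θ i • v i}

/-- The planar slice `V^r = {v ∈ V : v = θ₁ v_i + θ₂ v_j, θ₁, θ₂ ≥ 0}`. -/
def sliceV (f : EuclideanSpace ℝ (Fin 3) → ℝ)
    (v : Fin 3 → EuclideanSpace ℝ (Fin 3)) (r : Fin 3) :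
    Set (EuclideanSpace ℝ (Fin 3)) :=
  {w ∈ speedProfile f | ∃ θ : Fin 3 → ℝ, θ r = 0 ∧ (∀ i, 0 ≤ θ i) ∧ w = ∑ i, θ i • v i}

/-- The parallelogram `Π^r = {θ₁ v_i + θ₂ v_j : θ₁, θ₂ ∈ [0,1]}`. -/
def parallelogram (v : Fin 3 → EuclideanSpace ℝ (Fin 3)) (r : Fin 3) :
    Set (EuclideanSpace ℝ (Fin 3)) :=
  {w | ∃ θ : Fin 3 → ℝ, θ r = 0 ∧ (∀ i, 0 ≤ θ i ∧ θ i ≤ 1) ∧ w = ∑ i, θ i • v i}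

/--  The generalized semi-infinite cylinder
`Ψ^r = {θ₁ v_r + θ₂ u : u ∈ V^r, θ₁ ≥ 0, θ₂ ∈ [0,1]}`. -/
def cylinderPsi (f : EuclideanSpace ℝ (Fin 3) → ℝ)
    (v : Fin 3 → EuclideanSpace ℝ (Fin 3)) (r : Fin 3) :
    Set (EuclideanSpace ℝ (Fin 3)) :=
  {w | ∃ (θ₁ θ₂ : ℝ) (u : EuclideanSpace ℝ (Fin 3)),
    u ∈ sliceV f v r ∧ 0 ≤ θ₁ ∧ 0 ≤ θ₂ ∧ θ₂ ≤ 1 ∧ w = θ₁ • v r + θ₂ • u}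

section Helpers
variable {E : Type*} [NormedAddCommGroup E] [InnerProductSpace ℝ E]

lemma aux_unit {w : E} (hw : w ≠ 0) : ‖(‖w‖⁻¹ • w)‖ = 1 := by
  rw [norm_smul, norm_inv, norm_norm, inv_mul_cancel₀ (norm_ne_zero_iff.2 hw)]

lemma slCost_pos (f : E → ℝ) (hf : ∀ a : E, ‖a‖ = 1 → 0 < f a) {w : E} (hw : w ≠ 0) :
    0 < slCost f w :=
  div_pos (norm_pos_iff.2 hw) (hf _ (aux_unit hw))

lemma slVel_eq (f : E → ℝ) (hf : ∀ a : E, ‖a‖ = 1 → 0 < f a) {w : E} (hw : w ≠ 0) :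
    slVel f w = (slCost f w)⁻¹ • w := by
  have h1 := hf _ (aux_unit hw)
  have h2 : ‖w‖ ≠ 0 := norm_ne_zero_iff.2 hw
  rw [slVel, slCost, smul_smul]
  congr 1
  field_simp

lemma slVel_mem (f : E → ℝ) {w : E} (hw : w ≠ 0) : slVel f w ∈ speedProfile f :=
  ⟨‖w‖⁻¹ • w, aux_unit hw, rfl⟩

lemma smul_slVel (f : E → ℝ) (hf : ∀ a : E, ‖a‖ = 1 → 0 < f a) {w : E} (hw : w ≠ 0) :
    slCost f w • slVel f w = w := by
  rw [slVel_eq f hf hw, smul_smul, mul_inv_cancel₀ (slCost_pos f hf hw).ne', one_smul]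

lemma slVel_ne_zero (f : E → ℝ) (hf : ∀ a : E, ‖a‖ = 1 → 0 < f a) {w : E} (hw : w ≠ 0) :
    slVel f w ≠ 0 := by
  rw [slVel_eq f hf hw]
  exact smul_ne_zero (inv_ne_zero (slCost_pos f hf hw).ne') hw

lemma speedProfile_scale (f : E → ℝ) (hf : ∀ a : E, ‖a‖ = 1 → 0 < f a)
    {u v : E} (hu : u ∈ speedProfile f) (hv : v ∈ speedProfile f)
    {t : ℝ} (ht : 0 < t) (h : u = t • v) : t = 1 := by
  obtain ⟨a, ha, rfl⟩ := hu
  obtain ⟨b, hb, rfl⟩ := hv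
  have hfa := hf a ha
  have hfb := hf b hb
  have hn : f a = t * f b := by
    have h2 := congrArg norm h
    rw [norm_smul, norm_smul, norm_smul, ha, hb, mul_one, mul_one,
      Real.norm_eq_abs, Real.norm_eq_abs, Real.norm_eq_abs,
      abs_of_pos hfa, abs_of_pos ht, abs_of_pos hfb] at h2
    linarith [h2]
  have hab : a = b := by
    have h' : f a • a = f a • b := by rw [h, smul_smul, ← hn]
    exact smul_right_injective E hfa.ne' h'
  subst hab
  have h1 : t * f a = 1 * f a := by linarith
  exact mul_right_cancel₀ hfa.ne' h1

end Helpers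

section Fin3

variable {z : Fin 3 → EuclideanSpace ℝ (Fin 3)} {f : EuclideanSpace ℝ (Fin 3) → ℝ}

lemma vel_li (hz : LinearIndependent ℝ z)
    (hfpos : ∀ a : EuclideanSpace ℝ (Fin 3), ‖a‖ = 1 → 0 < f a) (g : Fin 3 → ℝ) (hg : ∑ j, g j • slVel f (z j) = 0) : ∀ j, g j = 0 := by
  intro j
  have hzne : ∀ j, z j ≠ 0 := fun j => hz.ne_zero j
  have h1 : ∑ j, (g j * (slCost f (z j))⁻¹) • z j = 0 := by
    rw [← hg]
    refine Finset.sum_congr rfl fun j _ => ?_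
    rw [slVel_eq f hfpos (hzne j), smul_smul]
  have h2 := Fintype.linearIndependent_iff.1 hz _ h1 j
  rcases mul_eq_zero.1 h2 with h | h
  · exact h
  · exact absurd h (inv_ne_zero (slCost_pos f hfpos (hzne j)).ne')

lemma vel_uniq (hz : LinearIndependent ℝ z)
    (hfpos : ∀ a : EuclideanSpace ℝ (Fin 3), ‖a‖ = 1 → 0 < f a) (α β : Fin 3 → ℝ)
    (h : ∑ j, α j • slVel f (z j) = ∑ j, β j • slVel f (z j)) : ∀ j, α j = β j := by
  intro j
  have h0 : ∑ j, (α j - β j) • slVel f (z j) = 0 := by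
    simp only [sub_smul, Finset.sum_sub_distrib, h, sub_self]
  linarith [vel_li hz hfpos _ h0 j]

lemma wrep (hz : LinearIndependent ℝ z)
    (hfpos : ∀ a : EuclideanSpace ℝ (Fin 3), ‖a‖ = 1 → 0 < f a) (ξ : Fin 3 → ℝ) :
    ∑ j, ξ j • z j = ∑ j, (ξ j * slCost f (z j)) • slVel f (z j) := by
  refine Finset.sum_congr rfl fun j _ => ?_
  rw [mul_smul]
  conv_lhs => rw [← smul_slVel f hfpos (hz.ne_zero j)]

lemma velrep (hz : LinearIndependent ℝ z)
    (hfpos : ∀ a : EuclideanSpace ℝ (Fin 3), ‖a‖ = 1 → 0 < f a) {ξ : Fin 3 → ℝ} (hwne : (∑ j, ξ j • z j) ≠ 0) :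
    slVel f (∑ j, ξ j • z j)
      = ∑ j, ((slCost f (∑ j, ξ j • z j))⁻¹ * (ξ j * slCost f (z j))) • slVel f (z j) := by
  rw [slVel_eq f hfpos hwne, Finset.smul_sum]
  refine Finset.sum_congr rfl fun j _ => ?_
  conv_lhs => rw [← smul_slVel f hfpos (hz.ne_zero j)]
  rw [smul_smul, smul_smul, mul_assoc]

lemma main1 (hz : LinearIndependent ℝ z)
    (hfpos : ∀ a : EuclideanSpace ℝ (Fin 3), ‖a‖ = 1 → 0 < f a) (r : Fin 3)
    (hPsi : sectorVs f (fun j => slVel f (z j)) ⊆ cylinderPsi f (fun j => slVel f (z j)) r)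
    (ξ γ : Fin 3 → ℝ) (c : ℝ) (hc : 0 < c)
    (hξ : ∀ j, 0 < ξ j) (hγr : γ r = 0) (hγ : ∀ j, 0 ≤ γ j)
    (hkey : ∀ j, j ≠ r → ξ j = c * γ j) :
    c * slCost f (∑ j, γ j • z j) ≤ slCost f (∑ j, ξ j • z j) := by
  have hzne : ∀ j, z j ≠ 0 := fun j => hz.ne_zero j
  have hCz : ∀ j, 0 < slCost f (z j) := fun j => slCost_pos f hfpos (hzne j)
  have hzli := Fintype.linearIndependent_iff.1 hz
  have hwne : (∑ j, ξ j • z j) ≠ 0 := fun h => absurd (hzli _ h r) (hξ r).ne'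
  obtain ⟨i, hir⟩ := exists_ne r
  have hγi : 0 < γ i := by
    have h := hkey i hir
    nlinarith [hξ i]
  have hw'ne : (∑ j, γ j • z j) ≠ 0 := fun h => absurd (hzli _ h i) hγi.ne'
  have hCw := slCost_pos f hfpos hwne
  have hCw' := slCost_pos f hfpos hw'ne
  set Cw := slCost f (∑ j, ξ j • z j) with hCwdef
  set Cw' := slCost f (∑ j, γ j • z j) with hCw'def
  -- membership in the sector
  have hmemV : slVel f (∑ j, ξ j • z j) ∈ sectorVs f (fun j => slVel f (z j)) := by
    refine ⟨slVel_mem f hwne, fun j => Cw⁻¹ * (ξ j * slCost f (z j)), fun j =>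
      mul_nonneg (inv_nonneg.2 hCw.le) (mul_nonneg (hξ j).le (hCz j).le), ?_⟩
    exact velrep hz hfpos hwne
  obtain ⟨θ₁, θ₂, u, ⟨huV, s, hsr, hs0, hurep⟩, hθ₁, hθ₂0, hθ₂1, hdecomp⟩ := hPsi hmemV
  beta_reduce at hdecomp hurep
  -- two representations of w in the basis (slVel f (z j))
  have hw2 : ∑ j, (ξ j * slCost f (z j)) • slVel f (z j)
      = ∑ j, ((if j = r then Cw * θ₁ else 0) + Cw * θ₂ * s j) • slVel f (z j) := by
    calc ∑ j, (ξ j * slCost f (z j)) • slVel f (z j)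
        = ∑ j, ξ j • z j := (wrep hz hfpos ξ).symm
      _ = Cw • slVel f (∑ j, ξ j • z j) := (smul_slVel f hfpos hwne).symm
      _ = (Cw * θ₁) • slVel f (z r) + ∑ j, (Cw * θ₂ * s j) • slVel f (z j) := by
          rw [hdecomp, hurep, smul_add, smul_smul, Finset.smul_sum, Finset.smul_sum]
          congr 1
          refine Finset.sum_congr rfl fun j _ => ?_
          rw [smul_smul, smul_smul]
      _ = ∑ j, ((if j = r then Cw * θ₁ else 0) + Cw * θ₂ * s j) • slVel f (z j) := by
          simp only [add_smul, Finset.sum_add_distrib, ite_smul, zero_smul,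
            Finset.sum_ite_eq', Finset.mem_univ, if_true]
  have hcoef := vel_uniq hz hfpos _ _ hw2
  -- the crucial identity:  (Cw θ₂) • u = (c • Cw') • slVel f w'
  have hEq : (Cw * θ₂) • u = (c * Cw') • slVel f (∑ j, γ j • z j) := by
    calc (Cw * θ₂) • u = ∑ j, (Cw * θ₂ * s j) • slVel f (z j) := by
          rw [hurep, Finset.smul_sum]
          exact Finset.sum_congr rfl fun j _ => smul_smul _ _ _
      _ = ∑ j, (c * γ j * slCost f (z j)) • slVel f (z j) := by
          refine Finset.sum_congr rfl fun j _ => ?_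
          congr 1
          by_cases h : j = r
          · subst h; rw [hsr, hγr]; ring
          · have h1 := hcoef j
            rw [if_neg h] at h1
            rw [← hkey j h]
            linarith [h1]
      _ = c • ∑ j, γ j • z j := by
          rw [Finset.smul_sum]
          refine Finset.sum_congr rfl fun j _ => ?_
          rw [mul_assoc, mul_smul]
          congr 1
          rw [mul_smul]
          conv_rhs => rw [← smul_slVel f hfpos (hzne j)]
      _ = (c * Cw') • slVel f (∑ j, γ j • z j) := by
          conv_lhs => rw [← smul_slVel f hfpos hw'ne]
          rw [smul_smul]
  have hvw'ne := slVel_ne_zero f hfpos hw'ne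
  have hccw' : 0 < c * Cw' := mul_pos hc hCw'
  have hθ₂pos : 0 < Cw * θ₂ := by
    rcases hθ₂0.eq_or_lt with h | h
    · exfalso
      apply hvw'ne
      have h0 : (Cw * θ₂) • u = 0 := by rw [← h, mul_zero]; exact zero_smul ℝ u
      rw [h0] at hEq
      exact (smul_eq_zero.1 hEq.symm).resolve_left hccw'.ne'
    · exact mul_pos hCw h
  have hu : u = ((Cw * θ₂)⁻¹ * (c * Cw')) • slVel f (∑ j, γ j • z j) := by
    rw [mul_smul, ← hEq, smul_smul, inv_mul_cancel₀ hθ₂pos.ne', one_smul]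
  have ht1 : (Cw * θ₂)⁻¹ * (c * Cw') = 1 :=
    speedProfile_scale f hfpos huV (slVel_mem f hw'ne)
      (mul_pos (inv_pos.2 hθ₂pos) hccw') hu
  have h2 : c * Cw' = Cw * θ₂ := by
    field_simp at ht1
    have hθ₂ne : θ₂ ≠ 0 := fun h => by rw [h, mul_zero] at hθ₂pos; exact lt_irrefl 0 hθ₂pos
    rw [div_eq_iff hθ₂ne] at ht1
    linarith [ht1]
  rw [h2]
  calc Cw * θ₂ ≤ Cw * 1 := by nlinarith
    _ = Cw := mul_one Cw

lemma main2 (hz : LinearIndependent ℝ z)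
    (hfpos : ∀ a : EuclideanSpace ℝ (Fin 3), ‖a‖ = 1 → 0 < f a) (r : Fin 3)
    (hPi : sliceV f (fun j => slVel f (z j)) r ⊆ parallelogram (fun j => slVel f (z j)) r)
    (ξ : Fin 3 → ℝ) (hξ : ∀ j, 0 ≤ ξ j) (hξr : ξ r = 0)
    (i : Fin 3) (hir : i ≠ r) (hξi : 0 < ξ i) :
    ξ i * slCost f (z i) ≤ slCost f (∑ j, ξ j • z j) := by
  have hzli := Fintype.linearIndependent_iff.1 hz
  have hwne : (∑ j, ξ j • z j) ≠ 0 := fun h => absurd (hzli _ h i) hξi.ne'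
  have hCw := slCost_pos f hfpos hwne
  set Cw := slCost f (∑ j, ξ j • z j) with hCwdef
  have hmemV : slVel f (∑ j, ξ j • z j) ∈ sliceV f (fun j => slVel f (z j)) r := by
    refine ⟨slVel_mem f hwne, fun j => Cw⁻¹ * (ξ j * slCost f (z j)), ?_, fun j =>
      mul_nonneg (inv_nonneg.2 hCw.le) (mul_nonneg (hξ j)
        (slCost_pos f hfpos (hz.ne_zero j)).le), ?_⟩
    · beta_reduce
      rw [hξr, zero_mul, mul_zero]
    · exact velrep hz hfpos hwne
  obtain ⟨θ', hθ'r, hbound, hrep'⟩ := hPi hmemV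
  beta_reduce at hrep'
  have h0 : ∑ j, θ' j • slVel f (z j)
      = ∑ j, (Cw⁻¹ * (ξ j * slCost f (z j))) • slVel f (z j) :=
    hrep'.symm.trans (velrep hz hfpos hwne)
  have hθ'i := vel_uniq hz hfpos _ _ h0 i
  have h1 : Cw⁻¹ * (ξ i * slCost f (z i)) ≤ 1 := hθ'i ▸ (hbound i).2
  have h2 : Cw * (Cw⁻¹ * (ξ i * slCost f (z i))) ≤ Cw * 1 :=
    mul_le_mul_of_nonneg_left h1 hCw.le
  rwa [← mul_assoc, mul_inv_cancel₀ hCw.ne', one_mul, mul_one] at h2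

end Fin3

/-- Causality condition on `V` in `ℝ³`.
If the speed profile is convex, `V_s ⊆ Ψ¹ ∩ Ψ² ∩ Ψ³`, and `V^r ⊆ Π^r` for each
`r`, then the simplex `(x = 0, z₁, z₂, z₃)` is monotone causal: in the interior
of `Ξ₃`, `C(ξ) ≥ (1−ξ_r)·C(γ_r)` for every oblique projection `γ_r`, and on each
face `ξ_r = 0` one has `C(ξ) ≥ ξ_i C_i` for the two active coordinates. -/
theorem stmt10 (z : Fin 3 → EuclideanSpace ℝ (Fin 3))
    (hz : LinearIndependent ℝ z)
    (f : EuclideanSpace ℝ (Fin 3) → ℝ)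
    (hfc : ContinuousOn f (Metric.sphere (0 : EuclideanSpace ℝ (Fin 3)) 1))
    (hfpos : ∀ a : EuclideanSpace ℝ (Fin 3), ‖a‖ = 1 → 0 < f a)
    (hVconv : Convex ℝ (speedBody f))
    (hPsi : ∀ r : Fin 3, sectorVs f (fun j => slVel f (z j)) ⊆
      cylinderPsi f (fun j => slVel f (z j)) r)
    (hPi : ∀ r : Fin 3, sliceV f (fun j => slVel f (z j)) r ⊆
      parallelogram (fun j => slVel f (z j)) r) :
    (∀ ξ : Fin 3 → ℝ, (∀ j, 0 < ξ j) → ∑ j, ξ j = 1 →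
      ∀ r : Fin 3,
        (1 - ξ r) *
            slCost f (∑ j, (if j = r then 0 else ξ j / (1 - ξ r)) • z j) ≤
          slCost f (∑ j, ξ j • z j)) ∧
    (∀ ξ : Fin 3 → ℝ, (∀ j, 0 ≤ ξ j) → ∑ j, ξ j = 1 →
      ∀ r : Fin 3, ξ r = 0 → (∀ i, i ≠ r → 0 < ξ i) →
        ∀ i, i ≠ r → ξ i * slCost f (z i) ≤ slCost f (∑ j, ξ j • z j)) := by
  constructor
  · intro ξ hξ hsum r
    have hs3 : ξ 0 + ξ 1 + ξ 2 = 1 := by rwa [Fin.sum_univ_three] at hsum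
    have h1r : 0 < 1 - ξ r := by
      fin_cases r
      · show (0:ℝ) < 1 - ξ 0; linarith [hξ 0, hξ 1, hξ 2]
      · show (0:ℝ) < 1 - ξ 1; linarith [hξ 0, hξ 1, hξ 2]
      · show (0:ℝ) < 1 - ξ 2; linarith [hξ 0, hξ 1, hξ 2]
    refine main1 hz hfpos r (hPsi r) ξ
      (fun j => if j = r then 0 else ξ j / (1 - ξ r)) (1 - ξ r) h1r hξ (by simp)
      (fun j => ?_) (fun j hj => ?_)
    · beta_reduce
      by_cases h : j = r
      · simp [h]
      · rw [if_neg h]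
        exact div_nonneg (hξ j).le h1r.le
    · beta_reduce
      rw [if_neg hj]
      field_simp
  · intro ξ hξ hsum r hr hpos i hir
    exact main2 hz hfpos r (hPi r) ξ hξ hr i hir (hpos i hir)
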